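/- Let K be a subfield of ℂ, let α ∈ K, and let m be an odd positive integer. Suppose β is a complex number with β^m = α such that β is algebraic over K and the degree of its minimal polynomial over K is a power of 2. Then there exists γ ∈ K with γ^m = α. -/

import Mathlib

open IntermediateField

set_option maxHeartbeats 1000000 in
set_option synthInstance.maxHeartbeats 400000 in

/-- Let `K` be a subfield of `ℂ`, `α ∈ K`, and `m` an odd positive
integer.  If `β` is a complex number with `β ^ m = α` that is algebraic over `K` with
minimal polynomial of degree a power of 2, then some `γ ∈ K` satisfies `γ ^ m = α`. -/
theorem exists_mth_root_in_base (K : Subfield ℂ) (α : ℂ) (hα : α ∈ K)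
    (m : ℕ) (hm : 0 < m) (hmodd : Odd m) (β : ℂ) (hβ : β ^ m = α)
    (halg : IsIntegral K β) (hdeg : ∃ j : ℕ, (minpoly K β).natDegree = 2 ^ j) :
    ∃ γ ∈ K, γ ^ m = α := by
  obtain ⟨j, hj⟩ := hdeg
  by_cases hα0 : α = 0
  · exact ⟨0, zero_mem K, by simp [hα0, zero_pow hm.ne']⟩
  set a : ↥K := ⟨α, hα⟩ with ha
  have ha0 : a ≠ 0 := by
    intro h
    apply hα0
    exact congrArg Subtype.val h
  -- work in K⟮β⟯
  have hfd : FiniteDimensional K K⟮β⟯ := IntermediateField.adjoin.finiteDimensional halg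
  have hrank : Module.finrank K K⟮β⟯ = 2 ^ j := by
    rw [IntermediateField.adjoin.finrank halg, hj]
  set g : K⟮β⟯ := IntermediateField.AdjoinSimple.gen K β with hg
  have hgm : g ^ m = algebraMap K K⟮β⟯ a := by
    apply Subtype.ext
    push_cast
    exact hβ
  set c : ↥K := Algebra.norm K g with hc
  have hcm : c ^ m = a ^ (2 ^ j) := by
    rw [hc, ← map_pow, hgm, Algebra.norm_algebraMap, hrank]
  have hc0 : c ≠ 0 := by
    intro h
    apply pow_ne_zero (2 ^ j) ha0
    rw [← hcm, h, zero_pow hm.ne']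
  -- coprimality
  have hcop : Nat.Coprime m (2 ^ j) :=
    Nat.Coprime.pow_right j (Nat.coprime_two_right.mpr hmodd)
  have : IsCoprime (m : ℤ) ((2 : ℤ) ^ j) := by
    rw [Int.isCoprime_iff_gcd_eq_one]
    exact_mod_cast hcop
  obtain ⟨u, v, huv⟩ := this
  refine ⟨(a ^ u * c ^ v : ↥K), ((a:↥K) ^ u * c ^ v : ↥K).2, ?_⟩
  have hcz : c ^ (m : ℤ) = a ^ ((2 : ℤ) ^ j) := by
    rw [zpow_natCast, hcm]
    norm_cast
  have key : (a ^ u * c ^ v) ^ (m : ℤ) = a := by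
    rw [mul_zpow, ← zpow_mul, ← zpow_mul, mul_comm v (m : ℤ), zpow_mul c, hcz,
      ← zpow_mul, ← zpow_add₀ ha0]
    rw [show u * (m : ℤ) + (2 : ℤ) ^ j * v = 1 by linarith]
    exact zpow_one a
  have h2 := congrArg Subtype.val key
  push_cast at h2 ⊢
  rw [show α = (a : ℂ) from rfl, ← h2, zpow_natCast]
  norm_cast
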